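/- Touching lemma: let β ≥ 0, let F : ℝ → ℝ be real analytic with F(0) = 0 and F′(0) = −c for some c > 0, let B ∈ ℝ, and let λ ∈ ℝ. Let φ, φ̃ : ℝ → ℝ be continuous, 2π-periodic, with zero mean, twice differentiable if β > 0, and suppose both satisfy the equation F(ψ(x)) + β·ψ″(x) = −(K∗ψ)(x) + B for all x ∈ ℝ (with the same constant B). Assume φ(x) ≥ φ̃(x) for all x ∈ [λ, λ+π] and that φ − φ̃ is odd with respect to λ, i.e., (φ − φ̃)(2λ − x) = −(φ − φ̃)(x) for all x ∈ ℝ. Then either φ = φ̃ on all of ℝ, or φ(x) > φ̃(x) for all x ∈ (λ, λ+π). -/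

import Mathlib

open Real MeasureTheory Filter

/-- The 2π-periodic kernel of `D⁻²`, equal to `(1/(4π))(|x|−π)² − π/12` on `[−π,π]`. -/
noncomputable def Kper (x : ℝ) : ℝ :=
  (1 / (4 * π)) * (|x - 2 * π * ((round (x / (2 * π)) : ℤ) : ℝ)| - π) ^ 2 - π / 12

/-- Periodic convolution with the kernel `Kper`. -/
noncomputable def Kconv (φ : ℝ → ℝ) (x : ℝ) : ℝ :=
  ∫ y in (-π)..π, Kper (x - y) * φ y

open Set Topology

lemma Kper_arg_le (x : ℝ) : |x - 2 * π * ((round (x / (2 * π)) : ℤ) : ℝ)| ≤ π := by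
  have hπ := Real.pi_pos
  have h := abs_sub_round (x / (2 * π))
  have h2 : x - 2 * π * ((round (x / (2 * π)) : ℤ) : ℝ)
      = (2 * π) * (x / (2 * π) - ((round (x / (2 * π)) : ℤ) : ℝ)) := by
    field_simp
  rw [h2, abs_mul, abs_of_pos (by linarith : (0:ℝ) < 2 * π)]
  nlinarith

lemma Kper_abs_le (x : ℝ) : |Kper x| ≤ π := by
  have hπ := Real.pi_pos
  have h := Kper_arg_le x
  have h0 := abs_nonneg (x - 2 * π * ((round (x / (2 * π)) : ℤ) : ℝ))
  set u := |x - 2 * π * ((round (x / (2 * π)) : ℤ) : ℝ)| with hu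
  have hsq : (u - π) ^ 2 ≤ π ^ 2 := by nlinarith
  have hinv : (0:ℝ) < 1 / (4 * π) := by positivity
  have hkey : (1 / (4 * π)) * (u - π) ^ 2 ≤ π / 4 := by
    have : (1 / (4 * π)) * (u - π) ^ 2 ≤ (1 / (4 * π)) * π ^ 2 := by nlinarith
    have h2 : (1 / (4 * π)) * π ^ 2 = π / 4 := by field_simp
    linarith
  have hge : (0:ℝ) ≤ (1 / (4 * π)) * (u - π) ^ 2 := by positivity
  rw [Kper, ← hu, abs_le]
  constructor <;> nlinarith

lemma Kper_periodic : Function.Periodic Kper (2 * π) := by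
  intro x
  have hπ := Real.pi_pos
  have h : (x + 2 * π) / (2 * π) = x / (2 * π) + 1 := by field_simp
  simp only [Kper, h, round_add_one]
  push_cast
  ring_nf

lemma Kper_measurable : Measurable Kper := by
  have h : Measurable fun x : ℝ => ((round (x / (2 * π)) : ℤ) : ℝ) := by
    simp_rw [round_eq]
    exact measurable_from_top.comp (((measurable_id.div_const (2*π)).add_const (1/2:ℝ)).floor)
  unfold Kper
  exact ((((measurable_id.sub (h.const_mul (2*π))).abs.sub_const π).pow_const 2).const_mul
    _).sub measurable_const

lemma Kper_eval {u : ℝ} (h1 : -π ≤ u) (h2 : u < π) :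
    Kper u = (1 / (4 * π)) * (|u| - π) ^ 2 - π / 12 := by
  have hπ := Real.pi_pos
  have hr : round (u / (2 * π)) = 0 := by
    rw [round_eq, Int.floor_eq_zero_iff]
    constructor
    · have : (0:ℝ) ≤ (u + π) / (2 * π) := div_nonneg (by linarith) (by positivity)
      calc (0:ℝ) ≤ (u + π) / (2*π) := this
        _ = u / (2*π) + 1/2 := by field_simp
    · have : u / (2 * π) + 1 / 2 < 1 ↔ u < π := by
        rw [div_add' _ _ _ (by positivity), div_lt_one (by positivity)]
        constructor <;> intro <;> nlinarith
      exact this.2 h2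
  simp [Kper, hr]

lemma Kint (ψ : ℝ → ℝ) (hψ : Continuous ψ) (g : ℝ → ℝ) (hg : Measurable g) (a b : ℝ) :
    IntervalIntegrable (fun y => Kper (g y) * ψ y) volume a b := by
  obtain ⟨C, hC⟩ := (isCompact_uIcc (a := a) (b := b)).exists_bound_of_continuousOn
    hψ.continuousOn
  apply IntervalIntegrable.mono_fun' (g := fun _ => π * |C|) intervalIntegrable_const
  · exact (((Kper_measurable.comp hg).mul hψ.measurable).aestronglyMeasurable)
  · refine (ae_restrict_mem measurableSet_uIoc).mono fun y hy => ?_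
    have h1 : ‖ψ y‖ ≤ C := hC y (uIoc_subset_uIcc hy)
    have h2 : |ψ y| ≤ |C| := le_trans h1 (le_abs_self C)
    simp only [Real.norm_eq_abs, abs_mul]
    exact mul_le_mul (Kper_abs_le _) h2 (abs_nonneg _) Real.pi_pos.le

lemma second_deriv_nonneg (f : ℝ → ℝ) (x₀ : ℝ) (hf : Differentiable ℝ f)
    (hf' : DifferentiableAt ℝ (deriv f) x₀) (hmin : IsLocalMin f x₀) :
    0 ≤ deriv (deriv f) x₀ := by
  by_contra hlt
  push_neg at hlt
  have h1 : deriv f x₀ = 0 := hmin.deriv_eq_zero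
  have h2 : Tendsto (slope (deriv f) x₀) (𝓝[≠] x₀) (𝓝 (deriv (deriv f) x₀)) :=
    hasDerivAt_iff_tendsto_slope.1 hf'.hasDerivAt
  have h3 : ∀ᶠ x in 𝓝[>] x₀, slope (deriv f) x₀ x < 0 :=
    ((h2.mono_left (nhdsWithin_mono _ fun x hx => ne_of_gt hx)).eventually_lt_const hlt)
  obtain ⟨u, hu, hIoo⟩ := mem_nhdsGT_iff_exists_Ioo_subset.1 h3
  obtain ⟨ε, hε, hball⟩ := Metric.eventually_nhds_iff.1 hmin
  set m := min ((x₀ + u) / 2) (x₀ + ε / 2) with hm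
  have hx₀m : x₀ < m := by
    simp only [hm, lt_min_iff]
    constructor <;> [linarith [hu.out]; linarith]
  have hderiv_neg : ∀ x ∈ Ioo x₀ m, deriv f x < 0 := by
    intro x hx
    have hxu : x ∈ Ioo x₀ u := ⟨hx.1, lt_of_lt_of_le hx.2 (le_trans (min_le_left _ _)
      (by linarith [hu.out]))⟩
    have := hIoo hxu
    simp only [mem_setOf_eq, slope_def_field] at this
    have hx0 : 0 < x - x₀ := by linarith [hx.1]
    rw [h1] at this
    -- this : (deriv f x - 0) / (x - x₀) < 0  (roughly)
    have := div_neg_iff.1 (by simpa using this)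
    rcases this with ⟨_, h⟩ | ⟨h, _⟩
    · linarith
    · exact h
  have hanti : StrictAntiOn f (Icc x₀ m) := by
    apply strictAntiOn_of_deriv_neg (convex_Icc _ _) hf.continuous.continuousOn
    intro x hx
    rw [interior_Icc] at hx
    exact hderiv_neg x hx
  have hfm : f m < f x₀ := hanti (left_mem_Icc.2 hx₀m.le) (right_mem_Icc.2 hx₀m.le) hx₀m
  have : f x₀ ≤ f m := by
    apply hball
    rw [Real.dist_eq]
    have : m ≤ x₀ + ε / 2 := min_le_right _ _
    rw [abs_of_pos (by linarith)]
    linarith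
  linarith

lemma Kper_diff_pos {a s : ℝ} (ha0 : 0 < a) (haπ : a < π) (hs0 : 0 < s) (hsπ : s < π) :
    0 < Kper (a - s) - Kper (a + s) := by
  have hπ := Real.pi_pos
  have h1 : Kper (a - s) = (1/(4*π)) * (|a-s| - π)^2 - π/12 :=
    Kper_eval (by linarith) (by linarith)
  have ht0 : 0 ≤ |a-s| := abs_nonneg _
  have hinv : (0:ℝ) < 1/(4*π) := by positivity
  rcases lt_or_ge (a + s) π with hcase | hcase
  · have h2 : Kper (a + s) = (1/(4*π)) * (|a+s| - π)^2 - π/12 :=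
      Kper_eval (by linarith) hcase
    rw [h1, h2, abs_of_pos (by linarith : (0:ℝ) < a + s)]
    have ht : |a - s| < a + s := abs_lt.2 ⟨by linarith, by linarith⟩
    have hkey : (a+s-π)^2 < (|a-s|-π)^2 := by nlinarith
    nlinarith [mul_pos hinv (by linarith : (0:ℝ) < (|a-s|-π)^2 - (a+s-π)^2)]
  · have h2 : Kper (a + s) = Kper (a + s - 2*π) := by
      have h := Kper_periodic (a + s - 2*π)
      rw [show a + s - 2*π + 2*π = a + s from by ring] at h
      exact h
    have h3 : Kper (a + s - 2*π) = (1/(4*π)) * (|a+s-2*π| - π)^2 - π/12 :=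
      Kper_eval (by linarith) (by linarith)
    have habs : |a + s - 2*π| = 2*π - (a+s) := by
      rw [abs_of_nonpos (by linarith)]; ring
    rw [h1, h2, h3, habs]
    have ht : |a - s| < 2*π - (a+s) := abs_lt.2 ⟨by linarith, by linarith⟩
    have hkey : (2*π - (a+s) - π)^2 < (|a-s|-π)^2 := by nlinarith
    nlinarith [mul_pos hinv (by linarith : (0:ℝ) < (|a-s|-π)^2 - (2*π-(a+s)-π)^2)]

/-- Touching lemma: if two periodic solutions of `F(ψ) + βψ″ = −K∗ψ + B` are ordered on a
half-period and their difference is odd about `λ`, then either they coincide or the order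
is strict on the open half-period. -/
theorem touching_lemma (β : ℝ) (hβ : 0 ≤ β) (F : ℝ → ℝ) (c : ℝ) (hc : 0 < c)
    (hF : ∀ x, AnalyticAt ℝ F x) (hF0 : F 0 = 0) (hF1 : deriv F 0 = -c)
    (B l : ℝ) (φ φt : ℝ → ℝ)
    (hφc : Continuous φ) (hφtc : Continuous φt)
    (hφp : Function.Periodic φ (2 * π)) (hφtp : Function.Periodic φt (2 * π))
    (hφ0 : (∫ y in (-π)..π, φ y) = 0) (hφt0 : (∫ y in (-π)..π, φt y) = 0)
    (hφd : 0 < β → Differentiable ℝ φ ∧ Differentiable ℝ (deriv φ))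
    (hφtd : 0 < β → Differentiable ℝ φt ∧ Differentiable ℝ (deriv φt))
    (heq : ∀ x, F (φ x) + β * deriv (deriv φ) x = -(Kconv φ x) + B)
    (heqt : ∀ x, F (φt x) + β * deriv (deriv φt) x = -(Kconv φt x) + B)
    (hge : ∀ x ∈ Set.Icc l (l + π), φt x ≤ φ x)
    (hodd : ∀ x, φ (2 * l - x) - φt (2 * l - x) = -(φ x - φt x)) :
    (∀ x, φ x = φt x) ∨ ∀ x ∈ Set.Ioo l (l + π), φt x < φ x := by
  classical
  have hπ := Real.pi_pos
  by_cases hstrict : ∀ x ∈ Set.Ioo l (l + π), φt x < φ x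
  · exact Or.inr hstrict
  left
  push_neg at hstrict
  obtain ⟨x₀, hx₀, hle⟩ := hstrict
  have hx0eq : φ x₀ = φt x₀ := le_antisymm hle (hge x₀ (Set.Ioo_subset_Icc_self hx₀))
  set w : ℝ → ℝ := fun x => φ x - φt x with hw
  have hwc : Continuous w := hφc.sub hφtc
  have hwp : Function.Periodic w (2*π) := hφp.sub hφtp
  have hwnn : ∀ x ∈ Set.Icc l (l+π), 0 ≤ w x := fun x hx => sub_nonneg.2 (hge x hx)
  have hwodd : ∀ x, w (2*l - x) = - w x := hodd
  have hw0 : w x₀ = 0 := sub_eq_zero_of_eq hx0eq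
  -- Step 1: the convolution difference at x₀ is nonpositive
  have hKdiff : Kconv φ x₀ - Kconv φt x₀ ≤ 0 := by
    have e1 := heq x₀
    have e2 := heqt x₀
    rw [hx0eq] at e1
    rcases eq_or_lt_of_le hβ with hβ0 | hβpos
    · rw [← hβ0] at e1 e2; linarith
    · obtain ⟨hφ1, hφ2⟩ := hφd hβpos
      obtain ⟨hφt1, hφt2⟩ := hφtd hβpos
      have hdw : deriv w = fun x => deriv φ x - deriv φt x :=
        funext fun x => deriv_sub (hφ1 x) (hφt1 x)
      have hwd1 : Differentiable ℝ w := hφ1.sub hφt1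
      have hwd2 : DifferentiableAt ℝ (deriv w) x₀ := by
        rw [hdw]; exact (hφ2 x₀).sub (hφt2 x₀)
      have hmin : IsLocalMin w x₀ :=
        Filter.eventually_of_mem (isOpen_Ioo.mem_nhds hx₀)
          fun x hx => hw0 ▸ hwnn x (Set.Ioo_subset_Icc_self hx)
      have hsec := second_deriv_nonneg w x₀ hwd1 hwd2 hmin
      have hsec' : deriv (deriv w) x₀ = deriv (deriv φ) x₀ - deriv (deriv φt) x₀ := by
        rw [hdw]
        exact deriv_sub (hφ2 x₀) (hφt2 x₀)
      rw [hsec'] at hsec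
      nlinarith [mul_nonneg hβ hsec]
  -- Step 2: rewrite the convolution difference as an integral over the half-period
  have hint1 : ∀ a b : ℝ, IntervalIntegrable (fun y => Kper (x₀ - y) * w y) volume a b :=
    fun a b => Kint w hwc (fun y => x₀ - y) (by fun_prop) a b
  have hint2 : ∀ a b : ℝ, IntervalIntegrable (fun y => Kper (x₀ - 2*l + y) * w y) volume a b :=
    fun a b => Kint w hwc (fun y => x₀ - 2*l + y) (by fun_prop) a b
  have hKconv_sub : Kconv φ x₀ - Kconv φt x₀ = ∫ y in (-π)..π, Kper (x₀ - y) * w y := by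
    rw [Kconv, Kconv, ← intervalIntegral.integral_sub
      (Kint φ hφc (fun y => x₀ - y) (by fun_prop) _ _)
      (Kint φt hφtc (fun y => x₀ - y) (by fun_prop) _ _)]
    exact intervalIntegral.integral_congr fun y _ => (mul_sub _ _ _).symm
  have hperint : Function.Periodic (fun y => Kper (x₀ - y) * w y) (2*π) := by
    intro y
    simp only
    rw [show x₀ - (y + 2*π) = (x₀ - y) - 2*π from by ring, Kper_periodic.sub_eq, hwp y]
  have hshift : (∫ y in (-π)..π, Kper (x₀ - y) * w y)
      = ∫ y in (l-π)..(l+π), Kper (x₀ - y) * w y := by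
    have h := hperint.intervalIntegral_add_eq (-π) (l-π)
    rw [show -π + 2*π = π from by ring, show l - π + 2*π = l + π from by ring] at h
    exact h
  have hsplit : (∫ y in (l-π)..(l+π), Kper (x₀ - y) * w y)
      = (∫ y in (l-π)..l, Kper (x₀ - y) * w y) + ∫ y in l..(l+π), Kper (x₀ - y) * w y :=
    (intervalIntegral.integral_add_adjacent_intervals (hint1 _ _) (hint1 _ _)).symm
  have hreflect : (∫ y in (l-π)..l, Kper (x₀ - y) * w y)
      = ∫ y in l..(l+π), -(Kper (x₀ - 2*l + y) * w y) := by
    have h := intervalIntegral.integral_comp_sub_left (a := l) (b := l+π)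
      (fun y => Kper (x₀ - y) * w y) (2*l)
    rw [show 2*l - (l+π) = l - π from by ring, show 2*l - l = l from by ring] at h
    rw [← h]
    refine intervalIntegral.integral_congr fun y _ => ?_
    show Kper (x₀ - (2*l - y)) * w (2*l - y) = -(Kper (x₀ - 2*l + y) * w y)
    rw [show x₀ - (2*l - y) = x₀ - 2*l + y from by ring, hwodd y]
    ring
  have hmain : Kconv φ x₀ - Kconv φt x₀
      = ∫ y in l..(l+π), (Kper (x₀ - y) * w y - Kper (x₀ - 2*l + y) * w y) := by
    rw [hKconv_sub, hshift, hsplit, hreflect, intervalIntegral.integral_neg,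
      intervalIntegral.integral_sub (hint1 _ _) (hint2 _ _)]
    ring
  -- Step 3: the kernel difference is positive inside, nonnegative on the closed interval
  have hG : ∀ a b : ℝ, IntervalIntegrable
      (fun y => Kper (x₀ - y) * w y - Kper (x₀ - 2*l + y) * w y) volume a b :=
    fun a b => (hint1 a b).sub (hint2 a b)
  have hgpos : ∀ y ∈ Set.Ioo l (l+π), 0 < Kper (x₀ - y) - Kper (x₀ - 2*l + y) := by
    intro y hy
    have h := Kper_diff_pos (a := x₀ - l) (s := y - l) (by linarith [hx₀.1])
      (by linarith [hx₀.2]) (by linarith [hy.1]) (by linarith [hy.2])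
    rw [show x₀ - l - (y - l) = x₀ - y from by ring,
      show x₀ - l + (y - l) = x₀ - 2*l + y from by ring] at h
    exact h
  have hgnn : ∀ y ∈ Set.Icc l (l+π), 0 ≤ Kper (x₀ - y) - Kper (x₀ - 2*l + y) := by
    intro y hy
    rcases eq_or_lt_of_le hy.1 with h1 | h1
    · rw [← h1, show x₀ - 2*l + l = x₀ - l from by ring]
      exact le_of_eq (sub_self _).symm
    rcases eq_or_lt_of_le hy.2 with h2 | h2
    · rw [h2]
      have h : Kper (x₀ - 2*l + (l+π)) = Kper (x₀ - (l+π)) := by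
        rw [show x₀ - 2*l + (l+π) = (x₀ - (l+π)) + 2*π from by ring, Kper_periodic]
      rw [h]
      exact le_of_eq (sub_self _).symm
    exact (hgpos y ⟨h1, h2⟩).le
  -- Step 4: w vanishes on the open half-period
  have hwIoo : ∀ y ∈ Set.Ioo l (l+π), w y = 0 := by
    by_contra hcon
    push_neg at hcon
    obtain ⟨y₁, hy₁, hne⟩ := hcon
    have hy1pos : 0 < w y₁ :=
      lt_of_le_of_ne (hwnn y₁ (Set.Ioo_subset_Icc_self hy₁)) (Ne.symm hne)
    have hUopen : IsOpen ({x | 0 < w x} ∩ Set.Ioo l (l+π)) :=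
      (isOpen_lt continuous_const hwc).inter isOpen_Ioo
    obtain ⟨δ, hδ, hball⟩ := Metric.isOpen_iff.1 hUopen y₁ ⟨hy1pos, hy₁⟩
    set u := max (y₁ - δ/2) ((l + y₁)/2) with hu
    set v := min (y₁ + δ/2) ((y₁ + (l+π))/2) with hv
    have hlu : l < u := lt_of_lt_of_le (by linarith [hy₁.1]) (le_max_right _ _)
    have huy : u < y₁ := max_lt (by linarith) (by linarith [hy₁.1])
    have hyv : y₁ < v := lt_min (by linarith) (by linarith [hy₁.2])
    have hvl : v < l + π := lt_of_le_of_lt (min_le_right _ _) (by linarith [hy₁.2])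
    have hsub : ∀ x ∈ Set.Ioo u v, 0 < w x ∧ x ∈ Set.Ioo l (l+π) := by
      intro x hx
      apply hball
      rw [Metric.mem_ball, Real.dist_eq, abs_lt]
      have hul : y₁ - δ/2 ≤ u := le_max_left _ _
      have hvr : v ≤ y₁ + δ/2 := min_le_left _ _
      exact ⟨by linarith [hx.1], by linarith [hx.2]⟩
    have hpos_mid : 0 < ∫ y in u..v,
        (Kper (x₀ - y) * w y - Kper (x₀ - 2*l + y) * w y) := by
      apply intervalIntegral.intervalIntegral_pos_of_pos_on (hG u v) _ (huy.trans hyv)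
      intro x hx
      obtain ⟨hwx, hxI⟩ := hsub x hx
      have h := hgpos x hxI
      nlinarith [mul_pos h hwx]
    have h1 : 0 ≤ ∫ y in l..u, (Kper (x₀ - y) * w y - Kper (x₀ - 2*l + y) * w y) := by
      apply intervalIntegral.integral_nonneg hlu.le
      intro x hx
      have hxI : x ∈ Set.Icc l (l+π) := ⟨hx.1, le_trans hx.2 (by linarith)⟩
      nlinarith [mul_nonneg (hgnn x hxI) (hwnn x hxI)]
    have h2 : 0 ≤ ∫ y in v..(l+π), (Kper (x₀ - y) * w y - Kper (x₀ - 2*l + y) * w y) := by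
      apply intervalIntegral.integral_nonneg hvl.le
      intro x hx
      have hxI : x ∈ Set.Icc l (l+π) := ⟨by linarith [hx.1], hx.2⟩
      nlinarith [mul_nonneg (hgnn x hxI) (hwnn x hxI)]
    have hA := intervalIntegral.integral_add_adjacent_intervals (hG l u) (hG u v)
    have hB := intervalIntegral.integral_add_adjacent_intervals (hG l v) (hG v (l+π))
    have hKle : (∫ y in l..(l+π), (Kper (x₀ - y) * w y - Kper (x₀ - 2*l + y) * w y)) ≤ 0 :=
      hmain ▸ hKdiff
    linarith
  -- Step 5: propagate to all of ℝ
  have hwl : w l = 0 := by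
    have h := hwodd l
    rw [show 2*l - l = l from by ring] at h
    linarith
  have hwlpi : w (l+π) = 0 := by
    have h1 := hwodd (l - π)
    rw [show 2*l - (l-π) = l + π from by ring] at h1
    have h2 := hwp (l - π)
    rw [show l - π + 2*π = l + π from by ring] at h2
    linarith
  have hwIcc : ∀ y ∈ Set.Icc l (l+π), w y = 0 := by
    intro y hy
    rcases eq_or_lt_of_le hy.1 with h1 | h1
    · rw [← h1]; exact hwl
    rcases eq_or_lt_of_le hy.2 with h2 | h2
    · rw [h2]; exact hwlpi
    exact hwIoo y ⟨h1, h2⟩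
  intro x
  rw [← sub_eq_zero]
  show w x = 0
  have h2π : (0:ℝ) < 2*π := by linarith
  have hzmem := toIcoMod_mem_Ico h2π (l - π) x
  have hzw : w (toIcoMod h2π (l - π) x) = w x := by
    rw [← self_sub_toIcoDiv_zsmul h2π (l-π) x]
    exact hwp.sub_zsmul_eq _
  set z := toIcoMod h2π (l - π) x
  rcases le_or_gt l z with hcase | hcase
  · rw [← hzw]
    exact hwIcc z ⟨hcase, by have := hzmem.2; linarith⟩
  · have h2 : 2*l - z ∈ Set.Icc l (l+π) := ⟨by linarith, by have := hzmem.1; linarith⟩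
    have h3 := hwodd z
    have h0 := hwIcc _ h2
    rw [← hzw]
    linarith
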